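/- Let H be a bipartite graph, T ⊆ V(H) a vertex cover of H, and G = H_T the graph obtained by attaching a union of complete graphs at each vertex of T, where every attached graph K(x_{i_j}) is star complete (has a simplicial vertex of degree ≥ 2, i.e., contains a complete graph on at least 3 vertices). Then ν(G) = cochord(G), and both equal the number of attached cliques of size at least 3. -/

import Mathlib

open MvPolynomial

noncomputable section

namespace EdgeIdealReg

open scoped Classical

/-- The edge ideal of a simple graph, in the polynomial ring with variables the vertices. -/
def edgeIdeal (K : Type) [Field K] {V : Type} (G : SimpleGraph V) :
    Ideal (MvPolynomial V K) :=
  Ideal.span { p | ∃ u v : V, G.Adj u v ∧ p = X u * X v }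

/-- The edge ideal of the induced subgraph on a set `s` of vertices, viewed inside the
polynomial ring of the ambient graph (extra variables do not change the regularity). -/
def edgeIdealOn (K : Type) [Field K] {V : Type} (G : SimpleGraph V) (s : Set V) :
    Ideal (MvPolynomial V K) :=
  Ideal.span { p | ∃ u v : V, G.Adj u v ∧ u ∈ s ∧ v ∈ s ∧ p = X u * X v }

/-- The `r`-th symbolic power of an ideal: the intersection over all minimal primes `p` of `I`
of the contraction of `I^r` localized at `p`; concretely,
`f ∈ I^{(r)}` iff for every minimal prime `p` of `I` there is `s ∉ p` with `s * f ∈ I ^ r`. -/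
def symbolicPower {R : Type} [CommRing R] (I : Ideal R) (r : ℕ) : Ideal R where
  carrier := { f | ∀ p ∈ I.minimalPrimes, ∃ s, s ∉ p ∧ s * f ∈ I ^ r }
  zero_mem' := by
    intro p hp
    exact ⟨1, (Ideal.ne_top_iff_one p).mp hp.1.1.ne_top, by simp⟩
  add_mem' := by
    intro a b ha hb p hp
    obtain ⟨s, hs, hsa⟩ := ha p hp
    obtain ⟨t, ht, htb⟩ := hb p hp
    refine ⟨s * t, fun h => ?_, ?_⟩
    · rcases hp.1.1.mem_or_mem h with h' | h'
      · exact hs h'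
      · exact ht h'
    · have : s * t * (a + b) = t * (s * a) + s * (t * b) := by ring
      rw [this]
      exact Ideal.add_mem _ (Ideal.mul_mem_left _ _ hsa) (Ideal.mul_mem_left _ _ htb)
  smul_mem' := by
    intro c f hf p hp
    obtain ⟨s, hs, hsf⟩ := hf p hp
    refine ⟨s, hs, ?_⟩
    have : s * (c • f) = c * (s * f) := by
      simp only [smul_eq_mul]; ring
    rw [this]
    exact Ideal.mul_mem_left _ _ hsf

/-- Symbolic power with an integer exponent, with the convention `I^{(k)} = S` for `k ≤ 0`. -/
def symbolicPowerZ {R : Type} [CommRing R] (I : Ideal R) (k : ℤ) : Ideal R :=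
  if k ≤ 0 then ⊤ else symbolicPower I k.toNat

/-- A graded free resolution of `S/I` over the polynomial ring `S = K[x_v]`:
`⋯ → F_{i+1} → F_i → ⋯ → F_0 = S → S/I → 0`, where `F_i` is a graded free module with
basis elements of degrees `deg i k`, the differentials are given by matrices of homogeneous
polynomials of the appropriate degrees, the image of `F_1 → F_0 = S` is `I`, and the
complex is exact in positive homological degrees. -/
structure GradedFreeResolution {K : Type} [Field K] {σ : Type}
    (I : Ideal (MvPolynomial σ K)) where
  rank : ℕ → ℕ
  deg : (i : ℕ) → Fin (rank i) → ℕ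
  rank_zero : rank 0 = 1
  deg_zero : ∀ k, deg 0 k = 0
  mat : (i : ℕ) → Matrix (Fin (rank i)) (Fin (rank (i + 1))) (MvPolynomial σ K)
  homog : ∀ i k j, mat i k j = 0 ∨
    ∃ e, deg (i + 1) j = deg i k + e ∧ (mat i k j).IsHomogeneous e
  range_zero : ∀ f : MvPolynomial σ K,
    f ∈ I ↔ (fun _ => f) ∈ LinearMap.range (Matrix.mulVecLin (mat 0))
  isExact : ∀ i, LinearMap.ker (Matrix.mulVecLin (mat i)) =
    LinearMap.range (Matrix.mulVecLin (mat (i + 1)))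

/-- The Castelnuovo–Mumford regularity of the quotient `S/I` for a homogeneous ideal `I` of
the polynomial ring: the least `d` such that some graded free resolution of `S/I` has all its
`i`-th syzygies generated in degrees `≤ d + i` (the minimal free resolution realizes the
infimum).  By convention `reg (S/S) = ⊥ = -∞`. -/

def regQuot {K : Type} [Field K] {σ : Type} (I : Ideal (MvPolynomial σ K)) : WithBot ℤ :=
  if I = ⊤ then ⊥
  else ((sInf { d : ℤ | ∃ F : GradedFreeResolution I,
      ∀ i (k : Fin (F.rank i)), (F.deg i k : ℤ) ≤ d + i } : ℤ) : WithBot ℤ)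

/-- A set of edges of `G` that forms a matching: pairwise disjoint edges. -/
def IsMatchingSet {V : Type} (G : SimpleGraph V) (M : Finset (Sym2 V)) : Prop :=
  (M : Set (Sym2 V)) ⊆ G.edgeSet ∧
    (M : Set (Sym2 V)).Pairwise fun e f => ∀ v, v ∈ e → v ∉ f

/-- An induced matching: a matching such that no two of its edges are joined by an edge
of `G`, i.e. it is the edge set of an induced subgraph. -/
def IsInducedMatchingSet {V : Type} (G : SimpleGraph V) (M : Finset (Sym2 V)) : Prop :=
  IsMatchingSet G M ∧
    (M : Set (Sym2 V)).Pairwise fun e f => ∀ u v, u ∈ e → v ∈ f → ¬G.Adj u v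

/-- The matching number `mat(G)`. -/
def matchingNumber {V : Type} (G : SimpleGraph V) : ℕ :=
  sSup { n | ∃ M, IsMatchingSet G M ∧ M.card = n }

/-- The induced matching number `ν(G)`. -/
def inducedMatchingNumber {V : Type} (G : SimpleGraph V) : ℕ :=
  sSup { n | ∃ M, IsInducedMatchingSet G M ∧ M.card = n }

/-- `G` has an induced cycle of length `n`. -/
def HasInducedCycle {V : Type} (G : SimpleGraph V) (n : ℕ) : Prop :=
  ∃ f : ZMod n → V, Function.Injective f ∧
    ∀ i j : ZMod n, G.Adj (f i) (f j) ↔ (j = i + 1 ∨ i = j + 1)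

/-- A graph is chordal if every induced cycle has length `3`. -/
def Chordal {V : Type} (G : SimpleGraph V) : Prop :=
  ∀ n, 4 ≤ n → ¬HasInducedCycle G n

/-- A graph is weakly chordal if every induced cycle in `G` and in `Gᶜ` has length at most 4. -/
def WeaklyChordal {V : Type} (G : SimpleGraph V) : Prop :=
  (∀ n, 5 ≤ n → ¬HasInducedCycle G n) ∧ ∀ n, 5 ≤ n → ¬HasInducedCycle Gᶜ n

/-- The co-chordal cover number `cochord(G)`: the least `n` such that `n` co-chordal
subgraphs of `G` cover all the edges of `G`. -/
def cochordNumber {V : Type} (G : SimpleGraph V) : ℕ :=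
  sInf { n | ∃ H : Fin n → SimpleGraph V,
    (∀ i, H i ≤ G ∧ Chordal (H i)ᶜ) ∧ ∀ e ∈ G.edgeSet, ∃ i, e ∈ (H i).edgeSet }

/-- A graph is unicyclic if it contains exactly one cycle. -/
def Unicyclic {V : Type} (G : SimpleGraph V) : Prop :=
  ∃ (v : V) (c : G.Walk v v), c.IsCycle ∧
    ∀ (w : V) (c' : G.Walk w w), c'.IsCycle → { e | e ∈ c'.edges } = { e | e ∈ c.edges }

/-- Data exhibiting `G` as the graph `H_T` obtained from the induced subgraph on `Hset`
by attaching, at each vertex of `T ⊆ Hset`, a union of complete graphs having that vertex as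
their only common vertex: a family of cliques `C i` of `G`, each meeting `Hset` exactly in
its attachment vertex `a i ∈ T`, two distinct cliques meeting in at most the common
attachment vertex, together covering all vertices outside `Hset`, and all edges of `G`
lying either inside `Hset` or inside one of the cliques. -/
structure CliqueAttachment {V : Type} (G : SimpleGraph V) (Hset T : Set V) where
  ι : Type
  C : ι → Finset V
  a : ι → V
  a_mem_T : ∀ i, a i ∈ T
  T_sub : T ⊆ Hset
  inter_H : ∀ i, (C i : Set V) ∩ Hset = {a i}
  a_mem_C : ∀ i, a i ∈ C i
  clique : ∀ i, G.IsClique (C i)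
  pairwise_inter : ∀ i j, i ≠ j → (C i : Set V) ∩ (C j : Set V) ⊆ ({a i} : Set V)
  cover : Hset ∪ (⋃ i, (C i : Set V)) = Set.univ
  edges_sub : ∀ u v, G.Adj u v → (u ∈ Hset ∧ v ∈ Hset) ∨ ∃ i, u ∈ C i ∧ v ∈ C i

lemma zmod_cast_ne {n : ℕ} (k : ℕ) (hn : 4 ≤ n) (hk : k ≠ 0) (hkn : k < n) :
    ((k : ZMod n)) ≠ 0 := by
  haveI : NeZero n := ⟨by omega⟩
  intro h
  rw [ZMod.natCast_eq_zero_iff] at h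
  have := Nat.le_of_dvd (by omega) h
  omega

lemma chordal_aux {V : Type} (G' : SimpleGraph V) (C : Set V)
    (h1 : ∀ u v, u ∈ C → v ∈ C → u ≠ v → G'.Adj u v)
    (h2 : ∀ u v, u ∉ C → v ∉ C → ¬ G'.Adj u v) :
    Chordal G'ᶜ := by
  rintro n hn ⟨f, hinj, hadj⟩
  haveI : NeZero n := ⟨by omega⟩
  have c1 : (1 : ZMod n) ≠ 0 := by
    have := zmod_cast_ne 1 hn one_ne_zero (by omega); simpa using this
  have c2 : (2 : ZMod n) ≠ 0 := by
    have := zmod_cast_ne 2 hn two_ne_zero (by omega); simpa using this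
  have c3 : (3 : ZMod n) ≠ 0 := by
    have := zmod_cast_ne 3 hn (by omega) (by omega)
    simpa using this
  -- consecutive fact for out-of-C positions
  have hcons : ∀ p q : ZMod n, f p ∉ C → f q ∉ C → p ≠ q → q = p + 1 ∨ p = q + 1 := by
    intro p q hp hq hpq
    have hadj' : G'ᶜ.Adj (f p) (f q) := by
      rw [SimpleGraph.compl_adj]
      exact ⟨hinj.ne hpq, h2 _ _ hp hq⟩
    exact (hadj p q).mp hadj'
  -- no two consecutive positions both in C
  have hK2 : ∀ p : ZMod n, f p ∈ C → f (p + 1) ∈ C → False := by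
    intro p hp hp1
    have hne : p ≠ p + 1 := by
      intro h; exact c1 (by linear_combination -h)
    have hadj' : G'ᶜ.Adj (f p) (f (p + 1)) := (hadj p (p + 1)).mpr (Or.inl rfl)
    rw [SimpleGraph.compl_adj] at hadj'
    exact hadj'.2 (h1 _ _ hp hp1 (hinj.ne hne))
  -- B is contained in a consecutive pair
  have key : ∃ p : ZMod n, ∀ s : ZMod n, f s ∉ C → s = p ∨ s = p + 1 := by
    by_cases hB : ∃ q : ZMod n, f q ∉ C
    · obtain ⟨q, hq⟩ := hB
      have pairlem : ∀ q : ZMod n, f q ∉ C → f (q + 1) ∉ C →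
          ∀ s : ZMod n, f s ∉ C → s = q ∨ s = q + 1 := by
        intro q hq hq1 s hs
        by_contra hcon
        push_neg at hcon
        obtain ⟨hs1, hs2⟩ := hcon
        have e1 := hcons q s hq hs (fun h => hs1 h.symm)
        have e2 := hcons (q + 1) s hq1 hs (fun h => hs2 h.symm)
        rcases e1 with e1 | e1
        · exact hs2 e1
        · rcases e2 with e2 | e2
          · exact c3 (by linear_combination -e1 - e2)
          · exact hs1 (by linear_combination -e2)
      by_cases hq1 : f (q + 1) ∉ C
      · exact ⟨q, pairlem q hq hq1⟩
      · push_neg at hq1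
        by_cases hqm : f (q - 1) ∉ C
        · have heq : q - 1 + 1 = q := by ring
          exact ⟨q - 1, pairlem (q - 1) hqm (by rw [heq]; exact hq)⟩
        · push_neg at hqm
          refine ⟨q, fun s hs => ?_⟩
          by_cases h : s = q
          · exact Or.inl h
          · rcases hcons q s hq hs (fun hh => h hh.symm) with e | e
            · exact Or.inr e
            · exfalso
              have : s = q - 1 := by linear_combination -e
              rw [this] at hs; exact hs hqm
    · push_neg at hB
      exact ⟨0, fun s hs => absurd (hB s) (by simpa using hs)⟩
  obtain ⟨p, hp⟩ := key
  -- positions p+2 and p+3 are in C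
  have h2mem : f (p + 2) ∈ C := by
    by_contra h
    rcases hp _ h with e | e
    · exact c2 (by linear_combination e)
    · exact c1 (by linear_combination e)
  have h3mem : f (p + 2 + 1) ∈ C := by
    by_contra h
    rcases hp _ h with e | e
    · exact c3 (by linear_combination e)
    · exact c2 (by linear_combination e)
  exact hK2 _ h2mem h3mem

lemma two_edges_c4 {V : Type} (Hi : SimpleGraph V) (u v u' v' : V)
    (huv : Hi.Adj u v) (hu'v' : Hi.Adj u' v')
    (h1 : u ≠ u') (h2 : u ≠ v') (h3 : v ≠ u') (h4 : v ≠ v')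
    (n1 : ¬Hi.Adj u u') (n2 : ¬Hi.Adj u v') (n3 : ¬Hi.Adj v u') (n4 : ¬Hi.Adj v v') :
    HasInducedCycle Hiᶜ 4 := by
  have huv' : u ≠ v := huv.ne
  have hu'v'' : u' ≠ v' := hu'v'.ne
  have e1 : u' ≠ u := fun h => h1 h.symm
  have e2 : v' ≠ u := fun h => h2 h.symm
  have e3 : u' ≠ v := fun h => h3 h.symm
  have e4 : v' ≠ v := fun h => h4 h.symm
  have huv'' : v ≠ u := fun h => huv' h.symm
  have hu'v''' : v' ≠ u' := fun h => hu'v'' h.symm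
  have huv2 : Hi.Adj v u := huv.symm
  have hu'v'2 : Hi.Adj v' u' := hu'v'.symm
  have s1 : ¬Hi.Adj u' u := fun h => n1 h.symm
  have s2 : ¬Hi.Adj v' u := fun h => n2 h.symm
  have s3 : ¬Hi.Adj u' v := fun h => n3 h.symm
  have s4 : ¬Hi.Adj v' v := fun h => n4 h.symm
  set g : ZMod 4 → V :=
    fun z => if z = 0 then u else if z = 1 then u' else if z = 2 then v else v' with hg
  have g0 : g 0 = u := if_pos rfl
  have g1 : g 1 = u' := by rw [hg]; beta_reduce; rw [if_neg (by decide), if_pos rfl]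
  have g2 : g 2 = v := by rw [hg]; beta_reduce; rw [if_neg (by decide), if_neg (by decide), if_pos rfl]
  have g3 : g 3 = v' := by
    rw [hg]; beta_reduce; rw [if_neg (by decide), if_neg (by decide), if_neg (by decide)]
  have henum : ∀ z : ZMod 4, z = 0 ∨ z = 1 ∨ z = 2 ∨ z = 3 := by decide
  refine ⟨g, ?_, ?_⟩
  · intro a b hab
    rcases henum a with ha | ha | ha | ha <;> rcases henum b with hb | hb | hb | hb <;>
        subst ha <;> subst hb <;>
        simp only [g0, g1, g2, g3] at hab <;>
        first
          | rfl
          | exact absurd hab (by assumption)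
  · intro i j
    rcases henum i with hi | hi | hi | hi <;> rcases henum j with hj | hj | hj | hj <;>
        subst hi <;> subst hj <;>
        simp only [g0, g1, g2, g3] <;>
        rw [SimpleGraph.compl_adj] <;>
        first
          | exact iff_of_true ⟨by assumption, by assumption⟩ (by decide)
          | exact iff_of_false (fun h => h.2 (by assumption)) (by decide)
          | exact iff_of_false (fun h => h.1 rfl) (by decide)

end EdgeIdealReg

open EdgeIdealReg in
/-- If `H` is bipartite, `T ⊆ V(H)` is a vertex cover of `H`, and `G = H_T` where every
attached union of complete graphs contains a clique on at least `3` vertices (is star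
complete), then `ν(G) = cochord(G)` and both equal the number of attached cliques of size
at least `3`. -/
theorem nu_eq_cochord_star_complete {V : Type} [Fintype V] [DecidableEq V]
    (G : SimpleGraph V) (Hset T : Set V) (hbip : (G.induce Hset).Colorable 2)
    (hcover : ∀ u v, u ∈ Hset → v ∈ Hset → G.Adj u v → u ∈ T ∨ v ∈ T)
    (A : CliqueAttachment G Hset T)
    (hstar : ∀ x ∈ T, ∃ i, A.a i = x ∧ 3 ≤ (A.C i).card) :
    inducedMatchingNumber G = cochordNumber G ∧
      cochordNumber G = Nat.card { i : A.ι // 3 ≤ (A.C i).card } := by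
  classical
  set Big := { i : A.ι // 3 ≤ (A.C i).card } with hBigdef
  have hTH : T ⊆ Hset := A.T_sub
  have haH : ∀ i, A.a i ∈ Hset := fun i => hTH (A.a_mem_T i)
  have hnotH : ∀ i, ∀ z ∈ A.C i, z ≠ A.a i → z ∉ Hset := by
    intro i z hz hza hzH
    have hmem : z ∈ (A.C i : Set V) ∩ Hset := ⟨hz, hzH⟩
    rw [A.inter_H] at hmem
    exact hza hmem
  have hF2 : ∀ i j : A.ι, i ≠ j → ∀ z ∈ A.C i, z ∉ Hset → z ∉ A.C j := by
    intro i j hij z hz hzH hzj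
    have := A.pairwise_inter i j hij ⟨hz, hzj⟩
    rw [Set.mem_singleton_iff] at this
    exact hzH (this ▸ haH i)
  have hF3 : ∀ i j : A.ι, i ≠ j → ∀ z w, z ∈ A.C i → z ∉ Hset → w ∈ A.C j → w ∉ Hset →
      ¬G.Adj z w := by
    intro i j hij z w hzi hzH hwj hwH hadj
    rcases A.edges_sub z w hadj with ⟨h1, _⟩ | ⟨k, hzk, hwk⟩
    · exact hzH h1
    · by_cases hk : k = i
      · subst hk
        have := A.pairwise_inter j k (fun h => hij h.symm) ⟨hwj, hwk⟩
        rw [Set.mem_singleton_iff] at this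
        exact hwH (this ▸ haH j)
      · have := A.pairwise_inter i k (fun h => hk h.symm) ⟨hzi, hzk⟩
        rw [Set.mem_singleton_iff] at this
        exact hzH (this ▸ haH i)
  -- finiteness of the set of big cliques
  have hCinj : Function.Injective (fun i : Big => A.C i.1) := by
    intro i j h
    simp only at h
    by_contra hne
    have hij : i.1 ≠ j.1 := fun h' => hne (Subtype.ext h')
    have hsub : ∀ z ∈ A.C i.1, z = A.a i.1 := by
      intro z hz
      have hz' : z ∈ A.C j.1 := h ▸ hz
      have := A.pairwise_inter i.1 j.1 hij ⟨hz, hz'⟩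
      rwa [Set.mem_singleton_iff] at this
    have hone : (A.C i.1).card ≤ 1 := Finset.card_le_one.mpr (by
      intro a ha b hb; rw [hsub a ha, hsub b hb])
    have := i.2
    omega
  haveI : Finite Big := Finite.of_injective _ hCinj
  haveI : Fintype Big := Fintype.ofFinite Big
  set m := Nat.card Big with hm
  have hmcard : m = Fintype.card Big := Nat.card_eq_fintype_card
  -- choose two non-attachment vertices in each big clique
  have keyuv : ∀ i : Big, ∃ u v : V, u ∈ A.C i.1 ∧ v ∈ A.C i.1 ∧ u ≠ v ∧
      u ≠ A.a i.1 ∧ v ≠ A.a i.1 := by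
    intro i
    have h3 := i.2
    have herase : 1 < ((A.C i.1).erase (A.a i.1)).card := by
      have := Finset.card_erase_of_mem (A.a_mem_C i.1)
      omega
    obtain ⟨u, hu, v, hv, huv⟩ := Finset.one_lt_card.mp herase
    exact ⟨u, v, Finset.mem_of_mem_erase hu, Finset.mem_of_mem_erase hv, huv,
      Finset.ne_of_mem_erase hu, Finset.ne_of_mem_erase hv⟩
  choose eu ev heu hev heuv heua heva using keyuv
  have heuH : ∀ i : Big, eu i ∉ Hset := fun i => hnotH i.1 _ (heu i) (heua i)
  have hevH : ∀ i : Big, ev i ∉ Hset := fun i => hnotH i.1 _ (hev i) (heva i)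
  have hmemC : ∀ (i : Big) (w : V), w ∈ s(eu i, ev i) → w ∈ A.C i.1 ∧ w ∉ Hset := by
    intro i w hw
    rw [Sym2.mem_iff] at hw
    rcases hw with rfl | rfl
    · exact ⟨heu i, heuH i⟩
    · exact ⟨hev i, hevH i⟩
  -- the induced matching made of one edge in each big clique
  set M : Finset (Sym2 V) := Finset.image (fun i : Big => s(eu i, ev i)) Finset.univ with hMdef
  have hMinj : Function.Injective (fun i : Big => s(eu i, ev i)) := by
    intro i j h
    simp only at h
    by_contra hij
    have hne : i.1 ≠ j.1 := fun h' => hij (Subtype.ext h')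
    have hmem : eu i ∈ s(eu j, ev j) := h ▸ Sym2.mem_mk_left _ _
    rw [Sym2.mem_iff] at hmem
    have hmem' : eu i ∈ A.C j.1 := by
      rcases hmem with h' | h' <;> rw [h']
      · exact heu j
      · exact hev j
    exact hF2 i.1 j.1 hne _ (heu i) (heuH i) hmem'
  have hMcard : M.card = m := by
    rw [hMdef, Finset.card_image_of_injective _ hMinj, Finset.card_univ, hmcard]
  have hgetM : ∀ e ∈ M, ∃ i : Big, s(eu i, ev i) = e := by
    intro e he
    rw [hMdef, Finset.mem_image] at he
    obtain ⟨i, _, hi⟩ := he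
    exact ⟨i, hi⟩
  have hMmatch : IsInducedMatchingSet G M := by
    refine ⟨⟨?_, ?_⟩, ?_⟩
    · intro e he
      obtain ⟨i, rfl⟩ := hgetM e he
      rw [SimpleGraph.mem_edgeSet]
      exact A.clique i.1 (heu i) (hev i) (heuv i)
    · intro e he f hf hef
      obtain ⟨i, rfl⟩ := hgetM e he
      obtain ⟨j, rfl⟩ := hgetM f hf
      have hij : i.1 ≠ j.1 := by
        intro h'
        exact hef (by rw [Subtype.ext h'])
      intro w hw hw'
      obtain ⟨hwi, hwH⟩ := hmemC i w hw
      obtain ⟨hwj, _⟩ := hmemC j w hw'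
      exact hF2 i.1 j.1 hij w hwi hwH hwj
    · intro e he f hf hef
      obtain ⟨i, rfl⟩ := hgetM e he
      obtain ⟨j, rfl⟩ := hgetM f hf
      have hij : i.1 ≠ j.1 := by
        intro h'
        exact hef (by rw [Subtype.ext h'])
      intro z w hz hw
      obtain ⟨hzi, hzH⟩ := hmemC i z hz
      obtain ⟨hwj, hwH⟩ := hmemC j w hw
      exact hF3 i.1 j.1 hij z w hzi hzH hwj hwH
  -- the chosen big clique at each vertex of T
  have cfacts : ∀ x : {x // x ∈ T}, ∃ i : A.ι, A.a i = x.1 ∧ 3 ≤ (A.C i).card :=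
    fun x => hstar x.1 x.2
  choose ch hch1 hch2 using cfacts
  -- the covering family of co-chordal subgraphs
  set Gr : Big → SimpleGraph V := fun i =>
    { Adj := fun u v => G.Adj u v ∧ ((u ∈ A.C i.1 ∧ v ∈ A.C i.1) ∨
        (i.1 = ch ⟨A.a i.1, A.a_mem_T i.1⟩ ∧ (u = A.a i.1 ∨ v = A.a i.1))),
      symm := by
        constructor
        intro u v h
        refine ⟨h.1.symm, ?_⟩
        rcases h.2 with ⟨h1, h2⟩ | ⟨h1, h2⟩
        · exact Or.inl ⟨h2, h1⟩
        · exact Or.inr ⟨h1, h2.symm⟩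
      loopless := ⟨fun v h => G.loopless.irrefl v h.1⟩ } with hGrdef
  have hGrle : ∀ i : Big, Gr i ≤ G := fun i u v h => h.1
  have hGrchordal : ∀ i : Big, Chordal (Gr i)ᶜ := by
    intro i
    apply chordal_aux (Gr i) (↑(A.C i.1))
    · intro u v hu hv hne
      exact ⟨A.clique i.1 hu hv hne, Or.inl ⟨hu, hv⟩⟩
    · intro u v hu hv hadj
      rcases hadj.2 with ⟨h1, _⟩ | ⟨_, h | h⟩
      · exact hu h1
      · exact hu (by rw [h]; exact Finset.mem_coe.mpr (A.a_mem_C i.1))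
      · exact hv (by rw [h]; exact Finset.mem_coe.mpr (A.a_mem_C i.1))
  have hcovm : ∀ u v, G.Adj u v → ∃ i : Big, (Gr i).Adj u v := by
    intro u v hadj
    have hstarcase : ∀ x (hx : x ∈ T), u = x ∨ v = x → ∃ i : Big, (Gr i).Adj u v := by
      intro x hx hux
      refine ⟨⟨ch ⟨x, hx⟩, hch2 ⟨x, hx⟩⟩, hadj, Or.inr ⟨?_, ?_⟩⟩
      · exact congrArg ch (Subtype.ext (hch1 ⟨x, hx⟩).symm)
      · rcases hux with h | h
        · exact Or.inl (h.trans (hch1 ⟨x, hx⟩).symm)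
        · exact Or.inr (h.trans (hch1 ⟨x, hx⟩).symm)
    rcases A.edges_sub u v hadj with ⟨hu, hv⟩ | ⟨j, hu, hv⟩
    · rcases hcover u v hu hv hadj with hx | hx
      · exact hstarcase u hx (Or.inl rfl)
      · exact hstarcase v hx (Or.inr rfl)
    · by_cases h3 : 3 ≤ (A.C j).card
      · exact ⟨⟨j, h3⟩, hadj, Or.inl ⟨hu, hv⟩⟩
      · have huvne : u ≠ v := hadj.ne
        have hsub2 : ({u, v} : Finset V) ⊆ A.C j := by
          intro z hz
          rcases Finset.mem_insert.mp hz with rfl | hz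
          · exact hu
          · rw [Finset.mem_singleton.mp hz]; exact hv
        have hcj : ({u, v} : Finset V) = A.C j := by
          apply Finset.eq_of_subset_of_card_le hsub2
          have : ({u, v} : Finset V).card = 2 := Finset.card_pair huvne
          omega
        have haj := A.a_mem_C j
        rw [← hcj] at haj
        rcases Finset.mem_insert.mp haj with h | h
        · exact hstarcase (A.a j) (A.a_mem_T j) (Or.inl h.symm)
        · exact hstarcase (A.a j) (A.a_mem_T j)
            (Or.inr (Finset.mem_singleton.mp h).symm)
  -- the two defining sets
  set S₁ := { n | ∃ M, IsInducedMatchingSet G M ∧ M.card = n } with hS₁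
  set S₂ := { n | ∃ H : Fin n → SimpleGraph V,
      (∀ i, H i ≤ G ∧ Chordal (H i)ᶜ) ∧ ∀ e ∈ G.edgeSet, ∃ i, e ∈ (H i).edgeSet } with hS₂
  have hν : inducedMatchingNumber G = sSup S₁ := rfl
  have hc : cochordNumber G = sInf S₂ := rfl
  have hm1 : m ∈ S₁ := ⟨M, hMmatch, hMcard⟩
  have hm2 : m ∈ S₂ := by
    have eqv : Big ≃ Fin m := Fintype.equivFinOfCardEq hmcard.symm
    refine ⟨fun k => Gr (eqv.symm k), fun k => ⟨hGrle _, hGrchordal _⟩, ?_⟩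
    intro e
    induction e using Sym2.ind with
    | _ x y =>
      intro he
      obtain ⟨i, hi⟩ := hcovm x y ((SimpleGraph.mem_edgeSet _).mp he)
      refine ⟨eqv i, ?_⟩
      show s(x, y) ∈ (Gr (eqv.symm (eqv i))).edgeSet
      rw [Equiv.symm_apply_apply]
      exact (SimpleGraph.mem_edgeSet _).mpr hi
  -- any induced matching is at most any co-chordal cover
  have hkey : ∀ k ∈ S₁, ∀ nn ∈ S₂, k ≤ nn := by
    rintro k ⟨Mk, ⟨⟨hsub, hdisj⟩, hind⟩, rfl⟩ nn ⟨Hf, hHf, hcov⟩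
    rcases Finset.eq_empty_or_nonempty Mk with rfl | ⟨e₀, he₀⟩
    · simp
    · obtain ⟨idx₀, _⟩ := hcov e₀ (hsub he₀)
      haveI : Nonempty (Fin nn) := ⟨idx₀⟩
      set φ : Sym2 V → Fin nn := fun e =>
        if h : ∃ idx, e ∈ (Hf idx).edgeSet then h.choose else Classical.arbitrary _ with hφdef
      have hφ : ∀ e ∈ Mk, e ∈ (Hf (φ e)).edgeSet := by
        intro e he
        have hex : ∃ idx, e ∈ (Hf idx).edgeSet := hcov e (hsub he)
        rw [hφdef]
        simp only [dif_pos hex]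
        exact hex.choose_spec
      have hinj2 : ∀ x y x' y' : V, s(x, y) ∈ Mk → s(x', y') ∈ Mk →
          s(x, y) ≠ s(x', y') → φ s(x, y) ≠ φ s(x', y') := by
        intro x y x' y' hxy hxy' hne heq
        have had1 : (Hf (φ s(x, y))).Adj x y := (SimpleGraph.mem_edgeSet _).mp (hφ _ hxy)
        have had2 : (Hf (φ s(x, y))).Adj x' y' := by
          have := hφ _ hxy'
          rw [← heq] at this
          exact (SimpleGraph.mem_edgeSet _).mp this
        have hdis := hdisj hxy hxy' hne
        have hindd := hind hxy hxy' hne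
        have hHle := (hHf (φ s(x, y))).1
        have hnadj : ∀ z w : V, z ∈ s(x, y) → w ∈ s(x', y') → ¬(Hf (φ s(x, y))).Adj z w :=
          fun z w hz hw h => hindd z w hz hw (hHle h)
        have hC4 : HasInducedCycle (Hf (φ s(x, y)))ᶜ 4 := by
          apply two_edges_c4 _ x y x' y' had1 had2
          · exact fun h => hdis x (Sym2.mem_mk_left _ _) (h ▸ Sym2.mem_mk_left _ _)
          · exact fun h => hdis x (Sym2.mem_mk_left _ _) (h ▸ Sym2.mem_mk_right _ _)
          · exact fun h => hdis y (Sym2.mem_mk_right _ _) (h ▸ Sym2.mem_mk_left _ _)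
          · exact fun h => hdis y (Sym2.mem_mk_right _ _) (h ▸ Sym2.mem_mk_right _ _)
          · exact hnadj x x' (Sym2.mem_mk_left _ _) (Sym2.mem_mk_left _ _)
          · exact hnadj x y' (Sym2.mem_mk_left _ _) (Sym2.mem_mk_right _ _)
          · exact hnadj y x' (Sym2.mem_mk_right _ _) (Sym2.mem_mk_left _ _)
          · exact hnadj y y' (Sym2.mem_mk_right _ _) (Sym2.mem_mk_right _ _)
        exact (hHf (φ s(x, y))).2 4 (by norm_num) hC4
      have hinj2' : ∀ e f : Sym2 V, e ∈ Mk → f ∈ Mk → e ≠ f → φ e ≠ φ f := by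
        intro e f
        induction e using Sym2.ind with
        | _ x y =>
          induction f using Sym2.ind with
          | _ x' y' => exact hinj2 x y x' y'
      have hinjOn : Set.InjOn φ ↑Mk := by
        intro e he f hf heq
        by_contra hne
        exact hinj2' e f (Finset.mem_coe.mp he) (Finset.mem_coe.mp hf) hne heq
      calc Mk.card ≤ (Finset.univ : Finset (Fin nn)).card :=
            Finset.card_le_card_of_injOn φ (fun a _ => Finset.mem_univ _) hinjOn
        _ = nn := Finset.card_univ.trans (Fintype.card_fin nn)
  have hS₂ne : S₂.Nonempty := ⟨m, hm2⟩
  have hbdd : BddAbove S₁ := by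
    refine ⟨Fintype.card (Sym2 V), ?_⟩
    rintro k ⟨Mk, _, rfl⟩
    exact Finset.card_le_univ Mk
  have h1 : m ≤ sSup S₁ := le_csSup hbdd hm1
  have h2 : sInf S₂ ≤ m := Nat.sInf_le hm2
  have h3 : sSup S₁ ≤ sInf S₂ :=
    csSup_le ⟨m, hm1⟩ (fun k hk => hkey k hk _ (Nat.sInf_mem hS₂ne))
  rw [hν, hc]
  constructor
  · omega
  · omega
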